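/- Let ℓ be even, let M be a perfect matching of a set of ℓ elements chosen uniformly at random, let S be a fixed subset of size s, and let E denote the number of matched pairs of M having exactly one element in S. If K is a natural number such that s − K and ℓ − s − K are both nonnegative and even, then P(E = K) = binom(s,K)·K!·(s−K−1)!!·binom(ℓ−s,K)·(ℓ−s−K−1)!! / (ℓ−1)!!. -/
import Mathlib


open Finset

/-- A perfect matching of `Fin ℓ`, encoded as a fixed-point-free involutive permutation. -/
abbrev PerfMatching (ℓ : ℕ) : Type := {f : Equiv.Perm (Fin ℓ) // ∀ x, f x ≠ x ∧ f (f x) = x}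

/-- `oddDoubleFact k = (2k-1)!! = (2k-1)(2k-3)⋯3⋅1`, with `oddDoubleFact 0 = (-1)!! = 1`. -/
def oddDoubleFact : ℕ → ℕ
  | 0 => 1
  | (k + 1) => (2 * k + 1) * oddDoubleFact k

set_option linter.unusedSectionVars false


/-- Matchings as involutive fixed-point-free functions. -/
def FM (α : Type) : Type := {f : α → α // (∀ x, f x ≠ x) ∧ ∀ x, f (f x) = x}

instance (α : Type) [Fintype α] [DecidableEq α] : Fintype (FM α) := by
  unfold FM; infer_instance

def FM.restrict {α : Type} (M : FM α) (p : α → Prop) (hp : ∀ x, p x → p (M.1 x)) :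
    FM {x // p x} :=
  ⟨fun x => ⟨M.1 x, hp x x.2⟩,
    fun x h => M.2.1 x (congrArg Subtype.val h),
    fun x => Subtype.ext (M.2.2 x)⟩

lemma FM.inj {α : Type} (M : FM α) {x y : α} (h : M.1 x = M.1 y) : x = y := by
  have := congrArg M.1 h
  rwa [M.2.2 x, M.2.2 y] at this

lemma sigmaFMExt {α : Type} {a : α}
    {b c : {b : α // b ≠ a}}
    {M : FM {x : α // x ≠ a ∧ x ≠ b.1}} {N : FM {x : α // x ≠ a ∧ x ≠ c.1}}
    (h : b.1 = c.1)
    (h2 : ∀ (x : α) (h1 : x ≠ a) (hb : x ≠ b.1) (hc : x ≠ c.1),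
      (M.1 ⟨x, h1, hb⟩ : α) = (N.1 ⟨x, h1, hc⟩ : α)) :
    (⟨b, M⟩ : Σ b : {b : α // b ≠ a}, FM {x : α // x ≠ a ∧ x ≠ b.1}) = ⟨c, N⟩ := by
  obtain ⟨b, hb⟩ := b; obtain ⟨c, hc⟩ := c
  simp only at h
  subst h
  refine congrArg (Sigma.mk (β := fun b : {b : α // b ≠ a} => FM {x : α // x ≠ a ∧ x ≠ b.1}) ⟨b, hb⟩) (Subtype.ext (funext fun x => ?_))
  exact Subtype.ext (h2 x.1 x.2.1 x.2.2 x.2.2)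

/-- The extension equivalence for the inductive count. -/
def fmStepEquiv (α : Type) [DecidableEq α] (a : α) :
    FM α ≃ Σ b : {b : α // b ≠ a}, FM {x : α // x ≠ a ∧ x ≠ b.1} where
  toFun M := ⟨⟨M.1 a, M.2.1 a⟩, M.restrict _ (fun x hx => by
      refine ⟨fun h => hx.2 ?_, fun h => hx.1 (M.inj h)⟩
      rw [← h]; exact (M.2.2 x).symm)⟩
  invFun p := by
    refine ⟨fun x => if h : x = a then p.1.1 else if h' : x = p.1.1 then a
        else (p.2.1 ⟨x, h, h'⟩ : α), fun x => ?_, fun x => ?_⟩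
    · by_cases h : x = a
      · simp only [dif_pos h]; exact fun hc => p.1.2 (hc.trans h)
      · simp only [dif_neg h]
        by_cases h' : x = p.1.1
        · simp only [dif_pos h']; exact fun hc => h hc.symm
        · simp only [dif_neg h']
          exact fun hc => p.2.2.1 ⟨x, h, h'⟩ (Subtype.ext hc)
    · by_cases h : x = a
      · have h2 : p.1.1 ≠ a := p.1.2
        simp [dif_pos h, dif_neg h2, h]
      · simp only [dif_neg h]
        by_cases h' : x = p.1.1
        · simp [h']
        · simp only [dif_neg h']
          have h1 : ((p.2.1 ⟨x, h, h'⟩ : {x : α // x ≠ a ∧ x ≠ p.1.1}) : α) ≠ a :=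
            (p.2.1 ⟨x, h, h'⟩).2.1
          have h2 : ((p.2.1 ⟨x, h, h'⟩ : {x : α // x ≠ a ∧ x ≠ p.1.1}) : α) ≠ p.1.1 :=
            (p.2.1 ⟨x, h, h'⟩).2.2
          simp only [dif_neg h1, dif_neg h2]
          exact congrArg Subtype.val (p.2.2.2 ⟨x, h, h'⟩)
  left_inv M := by
    apply Subtype.ext
    funext x
    by_cases h : x = a
    · simp [h]
    · simp only [dif_neg h]
      by_cases h' : x = M.1 a
      · simp only [dif_pos h']
        rw [h', M.2.2]
      · simp [dif_neg h', FM.restrict]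
  right_inv := by
    rintro ⟨⟨b, hb⟩, N⟩
    refine sigmaFMExt (dif_pos rfl) ?_
    intro x h1 hb' hc
    show (if h : x = a then _ else if h' : x = _ then a else _) = _
    rw [dif_neg h1, dif_neg hc]

lemma card_fm (n : ℕ) : ∀ (α : Type) [Fintype α] [DecidableEq α],
    Fintype.card α = 2 * n → Fintype.card (FM α) = oddDoubleFact n := by
  induction n with
  | zero =>
    intro α _ _ hcard
    have : IsEmpty α := Fintype.card_eq_zero_iff.mp (by omega)
    have : Fintype.card (FM α) = 1 := by
      refine Fintype.card_eq_one_iff.mpr ⟨⟨fun x => x, fun x => (‹IsEmpty α›.false x).elim,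
        fun x => rfl⟩, fun y => Subtype.ext (funext fun x => (‹IsEmpty α›.false x).elim)⟩
    simp [this, oddDoubleFact]
  | succ n ih =>
    intro α _ _ hcard
    have hpos : 0 < Fintype.card α := by omega
    obtain ⟨a⟩ := Fintype.card_pos_iff.mp hpos
    rw [Fintype.card_congr (fmStepEquiv α a), Fintype.card_sigma]
    have hterm : ∀ b : {b : α // b ≠ a},
        Fintype.card (FM {x : α // x ≠ a ∧ x ≠ b.1}) = oddDoubleFact n := by
      intro b
      apply ih
      rw [Fintype.card_subtype]
      have hfe : Finset.filter (fun x => x ≠ a ∧ x ≠ b.1) Finset.univ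
          = Finset.univ \ {a, b.1} := by
        ext x; simp [not_or, and_comm]
      rw [hfe, Finset.card_sdiff_of_subset (Finset.subset_univ _), Finset.card_univ,
        Finset.card_pair (Ne.symm b.2)]
      omega
    rw [Finset.sum_congr rfl (fun b _ => hterm b), Finset.sum_const, Finset.card_univ,
      smul_eq_mul]
    have hb1 : Fintype.card {b : α // b ≠ a} = 2 * n + 1 := by
      rw [Fintype.card_subtype]
      have : Finset.filter (fun x => x ≠ a) Finset.univ = Finset.univ \ {a} := by
        ext x; simp
      rw [this, Finset.card_sdiff_of_subset (Finset.subset_univ _), Finset.card_univ,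
        Finset.card_singleton]
      omega
    rw [hb1]
    rfl

section Fiber

variable {ℓ : ℕ} {S A B : Finset (Fin ℓ)}

lemma mem_A_iff {M : FM (Fin ℓ)} (hMA : S.filter (fun a => M.1 a ∉ S) = A) {a : Fin ℓ} :
    a ∈ A ↔ a ∈ S ∧ M.1 a ∉ S := by rw [← hMA, mem_filter]

lemma mem_B_iff {M : FM (Fin ℓ)} (hMB : Sᶜ.filter (fun a => M.1 a ∈ S) = B) {a : Fin ℓ} :
    a ∈ B ↔ a ∉ S ∧ M.1 a ∈ S := by rw [← hMB, mem_filter, mem_compl]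

lemma memB_of_memA {M : FM (Fin ℓ)} (hMA : S.filter (fun a => M.1 a ∉ S) = A)
    (hMB : Sᶜ.filter (fun a => M.1 a ∈ S) = B) {a : Fin ℓ} (ha : a ∈ A) : M.1 a ∈ B := by
  obtain ⟨h1, h2⟩ := (mem_A_iff hMA).mp ha
  exact (mem_B_iff hMB).mpr ⟨h2, by rw [M.2.2]; exact h1⟩

lemma memA_of_memB {M : FM (Fin ℓ)} (hMA : S.filter (fun a => M.1 a ∉ S) = A)
    (hMB : Sᶜ.filter (fun a => M.1 a ∈ S) = B) {a : Fin ℓ} (ha : a ∈ B) : M.1 a ∈ A := by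
  obtain ⟨h1, h2⟩ := (mem_B_iff hMB).mp ha
  exact (mem_A_iff hMA).mpr ⟨h2, by rw [M.2.2]; exact h1⟩

lemma mem1_closed {M : FM (Fin ℓ)} (hMA : S.filter (fun a => M.1 a ∉ S) = A) :
    ∀ x, x ∈ S \ A → M.1 x ∈ S \ A := by
  intro x hx
  rw [mem_sdiff] at hx ⊢
  obtain ⟨h1, h2⟩ := hx
  have hMx : M.1 x ∈ S := by
    by_contra hc
    exact h2 ((mem_A_iff hMA).mpr ⟨h1, hc⟩)
  refine ⟨hMx, fun hc => ?_⟩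
  have := ((mem_A_iff hMA).mp hc).2
  rw [M.2.2] at this
  exact this h1

lemma mem2_closed {M : FM (Fin ℓ)} (hMB : Sᶜ.filter (fun a => M.1 a ∈ S) = B) :
    ∀ x, x ∈ Sᶜ \ B → M.1 x ∈ Sᶜ \ B := by
  intro x hx
  rw [mem_sdiff, mem_compl] at hx ⊢
  obtain ⟨h1, h2⟩ := hx
  have hMx : M.1 x ∉ S := by
    by_contra hc
    exact h2 ((mem_B_iff hMB).mpr ⟨h1, hc⟩)
  refine ⟨hMx, fun hc => ?_⟩
  have := ((mem_B_iff hMB).mp hc).2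
  rw [M.2.2] at this
  exact h1 this

variable (hA : A ⊆ S) (hB : B ⊆ Sᶜ)

def glue (e : {x : Fin ℓ // x ∈ A} ≃ {x : Fin ℓ // x ∈ B})
    (M1 : FM {x : Fin ℓ // x ∈ S \ A}) (M2 : FM {x : Fin ℓ // x ∈ Sᶜ \ B}) :
    Fin ℓ → Fin ℓ := fun x =>
  if h : x ∈ A then (e ⟨x, h⟩ : Fin ℓ)
  else if h : x ∈ B then (e.symm ⟨x, h⟩ : Fin ℓ)
  else if h : x ∈ S \ A then (M1.1 ⟨x, h⟩ : Fin ℓ)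
  else if h : x ∈ Sᶜ \ B then (M2.1 ⟨x, h⟩ : Fin ℓ)
  else x

section GlueLemmas

variable (e : {x : Fin ℓ // x ∈ A} ≃ {x : Fin ℓ // x ∈ B})
    (M1 : FM {x : Fin ℓ // x ∈ S \ A}) (M2 : FM {x : Fin ℓ // x ∈ Sᶜ \ B})

include hA hB

lemma notA_of_memB {x : Fin ℓ} (h : x ∈ B) : x ∉ A :=
  fun hA' => (mem_compl.mp (hB h)) (hA hA')

lemma region (x : Fin ℓ) : x ∈ A ∨ x ∈ B ∨ x ∈ S \ A ∨ x ∈ Sᶜ \ B := by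
  by_cases hS : x ∈ S
  · by_cases h : x ∈ A
    · exact Or.inl h
    · exact Or.inr (Or.inr (Or.inl (mem_sdiff.mpr ⟨hS, h⟩)))
  · by_cases h : x ∈ B
    · exact Or.inr (Or.inl h)
    · exact Or.inr (Or.inr (Or.inr (mem_sdiff.mpr ⟨mem_compl.mpr hS, h⟩)))

lemma glue_memA {x : Fin ℓ} (h : x ∈ A) : glue e M1 M2 x = (e ⟨x, h⟩ : Fin ℓ) := dif_pos h

lemma glue_memB {x : Fin ℓ} (h : x ∈ B) : glue e M1 M2 x = (e.symm ⟨x, h⟩ : Fin ℓ) := by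
  rw [glue, dif_neg (notA_of_memB hA hB h), dif_pos h]

lemma glue_mem1 {x : Fin ℓ} (h : x ∈ S \ A) : glue e M1 M2 x = (M1.1 ⟨x, h⟩ : Fin ℓ) := by
  have h1 : x ∉ A := (mem_sdiff.mp h).2
  have h2 : x ∉ B := fun hc => (mem_compl.mp (hB hc)) (mem_sdiff.mp h).1
  rw [glue, dif_neg h1, dif_neg h2, dif_pos h]

lemma glue_mem2 {x : Fin ℓ} (h : x ∈ Sᶜ \ B) : glue e M1 M2 x = (M2.1 ⟨x, h⟩ : Fin ℓ) := by
  have hxS : x ∉ S := mem_compl.mp (mem_sdiff.mp h).1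
  have h1 : x ∉ A := fun hc => hxS (hA hc)
  have h2 : x ∉ B := (mem_sdiff.mp h).2
  have h3 : x ∉ S \ A := fun hc => hxS (mem_sdiff.mp hc).1
  rw [glue, dif_neg h1, dif_neg h2, dif_neg h3, dif_pos h]

lemma glue_fpf : ∀ x, glue e M1 M2 x ≠ x := by
  intro x
  rcases region hA hB x with h | h | h | h
  · rw [glue_memA hA hB e M1 M2 h]
    intro hc
    have := (e ⟨x, h⟩).2
    rw [hc] at this
    exact (mem_compl.mp (hB this)) (hA h)
  · rw [glue_memB hA hB e M1 M2 h]
    intro hc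
    have := (e.symm ⟨x, h⟩).2
    rw [hc] at this
    exact (mem_compl.mp (hB h)) (hA this)
  · rw [glue_mem1 hA hB e M1 M2 h]
    exact fun hc => M1.2.1 ⟨x, h⟩ (Subtype.ext hc)
  · rw [glue_mem2 hA hB e M1 M2 h]
    exact fun hc => M2.2.1 ⟨x, h⟩ (Subtype.ext hc)

lemma glue_invol : ∀ x, glue e M1 M2 (glue e M1 M2 x) = x := by
  intro x
  rcases region hA hB x with h | h | h | h
  · rw [glue_memA hA hB e M1 M2 h, glue_memB hA hB e M1 M2 (e ⟨x, h⟩).2]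
    exact congrArg Subtype.val (e.symm_apply_apply ⟨x, h⟩)
  · rw [glue_memB hA hB e M1 M2 h, glue_memA hA hB e M1 M2 (e.symm ⟨x, h⟩).2]
    exact congrArg Subtype.val (e.apply_symm_apply ⟨x, h⟩)
  · rw [glue_mem1 hA hB e M1 M2 h, glue_mem1 hA hB e M1 M2 (M1.1 ⟨x, h⟩).2]
    exact congrArg Subtype.val (M1.2.2 ⟨x, h⟩)
  · rw [glue_mem2 hA hB e M1 M2 h, glue_mem2 hA hB e M1 M2 (M2.1 ⟨x, h⟩).2]
    exact congrArg Subtype.val (M2.2.2 ⟨x, h⟩)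

lemma glue_crossA : S.filter (fun a => glue e M1 M2 a ∉ S) = A := by
  ext a
  rw [mem_filter]
  constructor
  · rintro ⟨haS, hga⟩
    by_contra hc
    have h : a ∈ S \ A := mem_sdiff.mpr ⟨haS, hc⟩
    rw [glue_mem1 hA hB e M1 M2 h] at hga
    exact hga (mem_sdiff.mp (M1.1 ⟨a, h⟩).2).1
  · intro h
    refine ⟨hA h, ?_⟩
    rw [glue_memA hA hB e M1 M2 h]
    exact mem_compl.mp (hB (e ⟨a, h⟩).2)

lemma glue_crossB : Sᶜ.filter (fun a => glue e M1 M2 a ∈ S) = B := by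
  ext a
  rw [mem_filter, mem_compl]
  constructor
  · rintro ⟨haS, hga⟩
    by_contra hc
    have h : a ∈ Sᶜ \ B := mem_sdiff.mpr ⟨mem_compl.mpr haS, hc⟩
    rw [glue_mem2 hA hB e M1 M2 h] at hga
    exact mem_compl.mp (mem_sdiff.mp (M2.1 ⟨a, h⟩).2).1 hga
  · intro h
    refine ⟨mem_compl.mp (hB h), ?_⟩
    rw [glue_memB hA hB e M1 M2 h]
    exact hA (e.symm ⟨a, h⟩).2

end GlueLemmas

def fiberEquiv :
    {M : FM (Fin ℓ) // S.filter (fun a => M.1 a ∉ S) = A ∧ Sᶜ.filter (fun a => M.1 a ∈ S) = B} ≃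
      ({x : Fin ℓ // x ∈ A} ≃ {x : Fin ℓ // x ∈ B}) ×
        FM {x : Fin ℓ // x ∈ S \ A} × FM {x : Fin ℓ // x ∈ Sᶜ \ B} where
  toFun := fun ⟨M, hMA, hMB⟩ =>
    ⟨{ toFun := fun a => ⟨M.1 a.1, memB_of_memA hMA hMB a.2⟩
       invFun := fun b => ⟨M.1 b.1, memA_of_memB hMA hMB b.2⟩
       left_inv := fun a => Subtype.ext (M.2.2 a.1)
       right_inv := fun b => Subtype.ext (M.2.2 b.1) },
     M.restrict _ (mem1_closed hMA), M.restrict _ (mem2_closed hMB)⟩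
  invFun := fun ⟨e, M1, M2⟩ =>
    ⟨⟨glue e M1 M2, glue_fpf hA hB e M1 M2, glue_invol hA hB e M1 M2⟩,
      glue_crossA hA hB e M1 M2, glue_crossB hA hB e M1 M2⟩
  left_inv := by
    rintro ⟨M, hMA, hMB⟩
    apply Subtype.ext
    apply Subtype.ext
    funext x
    rcases region hA hB x with h | h | h | h
    · exact glue_memA hA hB _ _ _ h
    · exact glue_memB hA hB _ _ _ h
    · exact glue_mem1 hA hB _ _ _ h
    · exact glue_mem2 hA hB _ _ _ h
  right_inv := by
    rintro ⟨e, M1, M2⟩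
    refine Prod.ext ?_ (Prod.ext ?_ ?_)
    · apply Equiv.ext
      intro a
      apply Subtype.ext
      exact glue_memA hA hB e M1 M2 a.2
    · apply Subtype.ext
      funext x
      apply Subtype.ext
      exact glue_mem1 hA hB e M1 M2 x.2
    · apply Subtype.ext
      funext x
      apply Subtype.ext
      exact glue_mem2 hA hB e M1 M2 x.2

end Fiber

section Count

variable {ℓ : ℕ} (S : Finset (Fin ℓ)) (K : ℕ)

lemma FM.injective {α : Type} (M : FM α) : Function.Injective M.1 := by
  intro x y h
  have := congrArg M.1 h
  rwa [M.2.2 x, M.2.2 y] at this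

lemma crossT_eq_image (M : FM (Fin ℓ)) :
    Sᶜ.filter (fun a => M.1 a ∈ S) = (S.filter (fun a => M.1 a ∉ S)).image M.1 := by
  ext x
  simp only [mem_filter, mem_image, mem_compl]
  constructor
  · rintro ⟨h1, h2⟩
    exact ⟨M.1 x, ⟨h2, by rw [M.2.2]; exact h1⟩, M.2.2 x⟩
  · rintro ⟨a, ⟨h1, h2⟩, rfl⟩
    exact ⟨h2, by rw [M.2.2]; exact h1⟩

lemma crossT_card (M : FM (Fin ℓ)) :
    (Sᶜ.filter (fun a => M.1 a ∈ S)).card = (S.filter (fun a => M.1 a ∉ S)).card := by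
  rw [crossT_eq_image, Finset.card_image_of_injective _ (FM.injective M)]

def stepB : {M : FM (Fin ℓ) // (S.filter (fun a => M.1 a ∉ S)).card = K} ≃
    Σ A : {A : Finset (Fin ℓ) // A ∈ S.powersetCard K},
      {M : FM (Fin ℓ) // S.filter (fun a => M.1 a ∉ S) = A.1} where
  toFun := fun ⟨M, h⟩ =>
    ⟨⟨S.filter (fun a => M.1 a ∉ S), mem_powersetCard.mpr ⟨filter_subset _ _, h⟩⟩, M, rfl⟩
  invFun := fun ⟨A, M, h⟩ => ⟨M, by rw [h]; exact (mem_powersetCard.mp A.2).2⟩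
  left_inv := fun ⟨M, h⟩ => rfl
  right_inv := by
    rintro ⟨⟨A, hAm⟩, M, h⟩
    obtain rfl : S.filter (fun a => M.1 a ∉ S) = A := h
    rfl

def stepC (A : Finset (Fin ℓ)) (hcA : A.card = K) :
    {M : FM (Fin ℓ) // S.filter (fun a => M.1 a ∉ S) = A} ≃
    Σ B : {B : Finset (Fin ℓ) // B ∈ Sᶜ.powersetCard K},
      {M : FM (Fin ℓ) // S.filter (fun a => M.1 a ∉ S) = A
        ∧ Sᶜ.filter (fun a => M.1 a ∈ S) = B.1} where
  toFun := fun ⟨M, h⟩ =>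
    ⟨⟨Sᶜ.filter (fun a => M.1 a ∈ S), mem_powersetCard.mpr ⟨filter_subset _ _, by
      rw [crossT_card, h, hcA]⟩⟩, M, h, rfl⟩
  invFun := fun ⟨B, M, h1, h2⟩ => ⟨M, h1⟩
  left_inv := fun ⟨M, h⟩ => rfl
  right_inv := by
    rintro ⟨⟨B, hBm⟩, M, h1, h2⟩
    obtain rfl : Sᶜ.filter (fun a => M.1 a ∈ S) = B := h2
    rfl

lemma count_fixed (A B : Finset (Fin ℓ)) (hA : A ⊆ S) (hB : B ⊆ Sᶜ)
    (hcA : A.card = K) (hcB : B.card = K)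
    (hsev : Even (S.card - K)) (htev : Even (Sᶜ.card - K)) :
    Fintype.card {M : FM (Fin ℓ) // S.filter (fun a => M.1 a ∉ S) = A
        ∧ Sᶜ.filter (fun a => M.1 a ∈ S) = B}
      = K.factorial * (oddDoubleFact ((S.card - K) / 2)
          * oddDoubleFact ((Sᶜ.card - K) / 2)) := by
  rw [Fintype.card_congr (fiberEquiv hA hB), Fintype.card_prod, Fintype.card_prod]
  have hcards : Fintype.card {x : Fin ℓ // x ∈ A} = K := (Fintype.card_coe A).trans hcA
  have hcardB : Fintype.card {x : Fin ℓ // x ∈ B} = K := (Fintype.card_coe B).trans hcB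
  have e0 : {x : Fin ℓ // x ∈ A} ≃ {x : Fin ℓ // x ∈ B} := by
    apply Fintype.equivOfCardEq; rw [hcards, hcardB]
  rw [Fintype.card_equiv e0, hcards]
  obtain ⟨m, hm⟩ := hsev
  obtain ⟨m', hm'⟩ := htev
  have h1 : Fintype.card (FM {x : Fin ℓ // x ∈ S \ A}) = oddDoubleFact ((S.card - K) / 2) := by
    rw [card_fm ((S.card - K) / 2)]
    rw [Fintype.card_coe, Finset.card_sdiff_of_subset hA, hcA]
    omega
  have h2 : Fintype.card (FM {x : Fin ℓ // x ∈ Sᶜ \ B}) = oddDoubleFact ((Sᶜ.card - K) / 2) := by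
    rw [card_fm ((Sᶜ.card - K) / 2)]
    rw [Fintype.card_coe, Finset.card_sdiff_of_subset hB, hcB]
    omega
  rw [h1, h2]

lemma count_per_A (A : Finset (Fin ℓ)) (hA : A ⊆ S) (hcA : A.card = K)
    (hsev : Even (S.card - K)) (htev : Even (Sᶜ.card - K)) :
    Fintype.card {M : FM (Fin ℓ) // S.filter (fun a => M.1 a ∉ S) = A}
      = Sᶜ.card.choose K * (K.factorial * (oddDoubleFact ((S.card - K) / 2)
          * oddDoubleFact ((Sᶜ.card - K) / 2))) := by
  rw [Fintype.card_congr (stepC S K A hcA), Fintype.card_sigma]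
  have hterm : ∀ B : {B : Finset (Fin ℓ) // B ∈ Sᶜ.powersetCard K},
      Fintype.card {M : FM (Fin ℓ) // S.filter (fun a => M.1 a ∉ S) = A
        ∧ Sᶜ.filter (fun a => M.1 a ∈ S) = B.1}
      = K.factorial * (oddDoubleFact ((S.card - K) / 2)
          * oddDoubleFact ((Sᶜ.card - K) / 2)) := by
    intro B
    obtain ⟨hB, hcB⟩ := mem_powersetCard.mp B.2
    exact count_fixed S K A B.1 hA hB hcA hcB hsev htev
  rw [Finset.sum_congr rfl (fun B _ => hterm B), Finset.sum_const, Finset.card_univ,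
    Fintype.card_coe, Finset.card_powersetCard, smul_eq_mul]

lemma count_main (hsev : Even (S.card - K)) (htev : Even (Sᶜ.card - K)) :
    Fintype.card {M : FM (Fin ℓ) // (S.filter (fun a => M.1 a ∉ S)).card = K}
      = S.card.choose K * (Sᶜ.card.choose K * (K.factorial
          * (oddDoubleFact ((S.card - K) / 2) * oddDoubleFact ((Sᶜ.card - K) / 2)))) := by
  rw [Fintype.card_congr (stepB S K), Fintype.card_sigma]
  have hterm : ∀ A : {A : Finset (Fin ℓ) // A ∈ S.powersetCard K},
      Fintype.card {M : FM (Fin ℓ) // S.filter (fun a => M.1 a ∉ S) = A.1}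
      = Sᶜ.card.choose K * (K.factorial * (oddDoubleFact ((S.card - K) / 2)
          * oddDoubleFact ((Sᶜ.card - K) / 2))) := by
    intro A
    obtain ⟨hA, hcA⟩ := mem_powersetCard.mp A.2
    exact count_per_A S K A.1 hA hcA hsev htev
  rw [Finset.sum_congr rfl (fun A _ => hterm A), Finset.sum_const, Finset.card_univ,
    Fintype.card_coe, Finset.card_powersetCard, smul_eq_mul]

end Count

def pmEquiv (ℓ : ℕ) : PerfMatching ℓ ≃ FM (Fin ℓ) where
  toFun M := ⟨fun x => M.1 x, fun x => (M.2 x).1, fun x => (M.2 x).2⟩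
  invFun f := ⟨Function.Involutive.toPerm f.1 f.2.2, fun x => ⟨f.2.1 x, f.2.2 x⟩⟩
  left_inv M := Subtype.ext (Equiv.ext fun x => rfl)
  right_inv f := rfl

theorem prob_cut_edges_eq
    (ℓ : ℕ) (hev : Even ℓ) (s : ℕ) (S : Finset (Fin ℓ)) (hS : S.card = s)
    (K : ℕ) (hKs : K ≤ s) (hsev : Even (s - K))
    (hKl : K ≤ ℓ - s) (hlev : Even (ℓ - s - K)) :
    (({M : PerfMatching ℓ | (S.filter (fun a => M.1 a ∉ S)).card = K}).ncard : ℝ)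
        / (Nat.card (PerfMatching ℓ))
      = (s.choose K * K.factorial * oddDoubleFact ((s - K) / 2)
          * (ℓ - s).choose K * oddDoubleFact ((ℓ - s - K) / 2) : ℝ)
        / (oddDoubleFact (ℓ / 2)) := by
  have hsl : s ≤ ℓ := by
    rw [← hS]
    simpa using Finset.card_le_univ S
  have hTcard : Sᶜ.card = ℓ - s := by
    rw [Finset.card_compl, hS, Fintype.card_fin]
  -- total count
  have htot : Nat.card (PerfMatching ℓ) = oddDoubleFact (ℓ / 2) := by
    rw [Nat.card_congr (pmEquiv ℓ), Nat.card_eq_fintype_card]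
    apply card_fm (ℓ / 2)
    rw [Fintype.card_fin]
    obtain ⟨m, hm⟩ := hev
    omega
  -- numerator count
  have hnum : ({M : PerfMatching ℓ | (S.filter (fun a => M.1 a ∉ S)).card = K}).ncard
      = s.choose K * K.factorial * oddDoubleFact ((s - K) / 2)
          * (ℓ - s).choose K * oddDoubleFact ((ℓ - s - K) / 2) := by
    rw [← Nat.card_coe_set_eq]
    have he : {M : PerfMatching ℓ // (S.filter (fun a => M.1 a ∉ S)).card = K}
        ≃ {M : FM (Fin ℓ) // (S.filter (fun a => M.1 a ∉ S)).card = K} :=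
      Equiv.subtypeEquiv (pmEquiv ℓ) (fun M => Iff.rfl)
    rw [show (↥{M : PerfMatching ℓ | (S.filter (fun a => M.1 a ∉ S)).card = K})
        = {M : PerfMatching ℓ // (S.filter (fun a => M.1 a ∉ S)).card = K} from rfl]
    rw [Nat.card_congr he, Nat.card_eq_fintype_card]
    rw [count_main S K (by rw [hS]; exact hsev) (by rw [hTcard]; exact hlev)]
    rw [hS, hTcard]
    ring
  rw [htot, hnum]
  push_cast
  ring
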